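/- Let H be a finite-dimensional complex Hilbert space, ψ, φ unit vectors, Π_1,...,Π_n orthogonal projections with sum_k Π_k = 1, T = |⟨φ,ψ⟩|², and S = sum_j |⟨φ,Π_j ψ⟩|². Then S ≤ (T+1)/2. -/

import Mathlib

open scoped InnerProductSpace

theorem stmt_12 {H : Type*} [NormedAddCommGroup H] [InnerProductSpace ℂ H]
    [FiniteDimensional ℂ H] (n : ℕ) (ψ φ : H) (hψ : ‖ψ‖ = 1) (hφ : ‖φ‖ = 1)
    (Pr : Fin n → H →ₗ[ℂ] H) (hsa : ∀ k, (Pr k).IsSymmetric)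
    (hidem : ∀ k, Pr k ∘ₗ Pr k = Pr k) (hsum : ∑ k, Pr k = LinearMap.id)
    (T S : ℝ) (hT : T = ‖⟪φ, ψ⟫_ℂ‖ ^ 2)
    (hS : S = ∑ j, ‖⟪φ, Pr j ψ⟫_ℂ‖ ^ 2) :
    S ≤ (T + 1) / 2 := by
  set a : Fin n → ℂ := fun j => ⟪φ, Pr j ψ⟫_ℂ with ha
  -- basic: applying the sum of projections
  have happ : ∀ v : H, ∑ j, Pr j v = v := by
    intro v
    have := congrArg (fun L : H →ₗ[ℂ] H => L v) hsum
    simpa [LinearMap.sum_apply] using this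
  have hsuma : ∑ j, a j = ⟪φ, ψ⟫_ℂ := by
    rw [← inner_sum, happ]
  have hswap : ∀ j (x y : H), ⟪x, Pr j y⟫_ℂ = ⟪Pr j x, Pr j y⟫_ℂ := by
    intro j x y
    conv_lhs => rw [show Pr j y = Pr j (Pr j y) by
      rw [← LinearMap.comp_apply, hidem]]
    exact ((hsa j) x (Pr j y)).symm
  have hnorm : ∀ v : H, ‖v‖ = 1 → ∑ j, ‖Pr j v‖ ^ 2 = 1 := by
    intro v hv
    have h1 : ∀ j : Fin n, ‖Pr j v‖ ^ 2 = (⟪v, Pr j v⟫_ℂ).re := by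
      intro j
      rw [hswap j v v, show (⟪(Pr j) v, (Pr j) v⟫_ℂ).re
        = RCLike.re ⟪(Pr j) v, (Pr j) v⟫_ℂ from rfl, inner_self_eq_norm_sq (𝕜 := ℂ)]
    calc ∑ j, ‖Pr j v‖ ^ 2 = ∑ j, (⟪v, Pr j v⟫_ℂ).re := by
          exact Finset.sum_congr rfl fun j _ => h1 j
      _ = (∑ j, ⟪v, Pr j v⟫_ℂ).re := (Complex.re_sum _ _).symm
      _ = (⟪v, v⟫_ℂ).re := by rw [← inner_sum, happ]
      _ = 1 := by
          rw [show (⟪v, v⟫_ℂ).re = RCLike.re ⟪v, v⟫_ℂ from rfl,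
            inner_self_eq_norm_sq (𝕜 := ℂ), hv]; norm_num
  -- bound each |a j|
  have hs_le : ∀ j, ‖a j‖ ≤ ‖Pr j φ‖ * ‖Pr j ψ‖ := by
    intro j
    rw [ha]
    simp only
    rw [hswap j φ ψ]
    exact norm_inner_le_norm _ _
  have habs_nonneg : ∀ j, 0 ≤ ‖a j‖ := fun j => norm_nonneg _
  have hsum_s_nonneg : 0 ≤ ∑ j, ‖a j‖ :=
    Finset.sum_nonneg fun j _ => habs_nonneg j
  have hsum_s : ∑ j, ‖a j‖ ≤ 1 := by
    have h1 : ∑ j, ‖a j‖ ≤ ∑ j, ‖Pr j φ‖ * ‖Pr j ψ‖ :=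
      Finset.sum_le_sum fun j _ => hs_le j
    have h2 : (∑ j, ‖Pr j φ‖ * ‖Pr j ψ‖) ^ 2 ≤
        (∑ j, ‖Pr j φ‖ ^ 2) * (∑ j, ‖Pr j ψ‖ ^ 2) :=
      Finset.sum_mul_sq_le_sq_mul_sq _ _ _
    rw [hnorm φ hφ, hnorm ψ hψ, mul_one] at h2
    have h3 : 0 ≤ ∑ j, ‖Pr j φ‖ * ‖Pr j ψ‖ :=
      Finset.sum_nonneg fun j _ => mul_nonneg (norm_nonneg _) (norm_nonneg _)
    nlinarith
  -- key combinatorial inequality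
  have hterm : ∀ j k : Fin n,
      0 ≤ ‖a j‖ * ‖a k‖ + ((starRingEnd ℂ) (a j) * a k).re := by
    intro j k
    have h1 : |((starRingEnd ℂ) (a j) * a k).re| ≤ ‖(starRingEnd ℂ) (a j) * a k‖ :=
      Complex.abs_re_le_norm _
    have h2 : ‖(starRingEnd ℂ) (a j) * a k‖ =
        ‖a j‖ * ‖a k‖ := by
      rw [norm_mul, Complex.norm_conj]
    rw [h2] at h1
    linarith [neg_abs_le (((starRingEnd ℂ) (a j) * a k).re)]
  have hdiag : ∀ j : Fin n,
      ‖a j‖ * ‖a j‖ + ((starRingEnd ℂ) (a j) * a j).re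
        = 2 * ‖a j‖ ^ 2 := by
    intro j
    have : (starRingEnd ℂ) (a j) * a j = (Complex.normSq (a j) : ℂ) :=
      (Complex.normSq_eq_conj_mul_self).symm
    rw [this, Complex.ofReal_re, ← Complex.sq_norm]
    ring
  have expandT : T = ∑ j, ∑ k, ((starRingEnd ℂ) (a j) * a k).re := by
    rw [hT, ← hsuma, Complex.sq_norm]
    have : (starRingEnd ℂ) (∑ j, a j) * (∑ k, a k)
        = ∑ j, ∑ k, (starRingEnd ℂ) (a j) * a k := by
      rw [map_sum, Finset.sum_mul_sum]
    have h2 : Complex.normSq (∑ j, a j)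
        = ((starRingEnd ℂ) (∑ j, a j) * (∑ k, a k)).re := by
      rw [← Complex.normSq_eq_conj_mul_self, Complex.ofReal_re]
    rw [h2, this, Complex.re_sum]
    exact Finset.sum_congr rfl fun j _ => Complex.re_sum _ _
  have expandSq : (∑ j, ‖a j‖) ^ 2
      = ∑ j, ∑ k, ‖a j‖ * ‖a k‖ := by
    rw [sq, Finset.sum_mul_sum]
  have key : 2 * S ≤ (∑ j, ‖a j‖) ^ 2 + T := by
    rw [expandSq, expandT, hS, Finset.mul_sum, ← Finset.sum_add_distrib]
    refine Finset.sum_le_sum fun j _ => ?_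
    have h1 : ‖a j‖ * ‖a j‖ + ((starRingEnd ℂ) (a j) * a j).re
        ≤ ∑ k, (‖a j‖ * ‖a k‖ + ((starRingEnd ℂ) (a j) * a k).re) := by
      exact Finset.single_le_sum (fun k _ => hterm j k) (Finset.mem_univ j)
    rw [hdiag j] at h1
    calc 2 * ‖a j‖ ^ 2
        ≤ ∑ k, (‖a j‖ * ‖a k‖ + ((starRingEnd ℂ) (a j) * a k).re) := h1
      _ = (∑ k, ‖a j‖ * ‖a k‖)
          + ∑ k, ((starRingEnd ℂ) (a j) * a k).re := Finset.sum_add_distrib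
  nlinarith [key, hsum_s, hsum_s_nonneg]
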